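/- Let p be a prime with p ≠ 2, p ≠ 5, and (5/p) = 1, and let q = p^n. Then the number of triples (a,b,c) in F_q^3 with c^4 - a*b*c^3 + (a^2+b^2-3)*c^2 - a*b*c + 1 = 0 equals q^2 + 4q + 3. -/

import Mathlib

open Finset

variable {K : Type} [Field K] [Fintype K] [DecidableEq K]

lemma aux_card_ne_zero : Fintype.card {u : K // u ≠ 0} = Fintype.card K - 1 := by
  rw [← Fintype.card_units (α := K)]
  exact (Fintype.card_congr unitsEquivNeZero).symm

lemma aux_card_hyperbola (c : K) (hc : c ≠ 0) :
    Fintype.card {uv : K × K // uv.1 * uv.2 = c} = Fintype.card K - 1 := by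
  rw [← aux_card_ne_zero]
  apply Fintype.card_congr
  refine ⟨fun uv => ⟨uv.1.1, fun h => hc (by rw [← uv.2, h, zero_mul])⟩,
    fun u => ⟨(u.1, c / u.1), by rw [mul_comm, div_mul_cancel₀ c u.2]⟩, ?_, ?_⟩
  · rintro ⟨⟨u, v⟩, h⟩
    have hu : u ≠ 0 := fun h0 => hc (by rw [← h, h0, zero_mul])
    apply Subtype.ext
    simp only
    rw [Prod.ext_iff]
    exact ⟨rfl, by field_simp [eq_comm, ← h, mul_comm]; exact h.symm⟩
  · rintro ⟨u, hu⟩; rfl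

lemma aux_card_cross :
    Fintype.card {uv : K × K // uv.1 * uv.2 = 0} = 2 * Fintype.card K - 1 := by
  have h1 : Fintype.card {uv : K × K // ¬ uv.1 * uv.2 = 0} = (Fintype.card K - 1) * (Fintype.card K - 1) := by
    have e : {uv : K × K // ¬ uv.1 * uv.2 = 0} ≃ {u : K // u ≠ 0} × {u : K // u ≠ 0} :=
      (Equiv.subtypeEquiv (Equiv.refl _) (by
        intro a; simp [mul_eq_zero, not_or])).trans Equiv.subtypeProdEquivProd
    rw [Fintype.card_congr e, Fintype.card_prod, aux_card_ne_zero]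
  have h2 := Fintype.card_subtype_compl (fun uv : K × K => uv.1 * uv.2 = 0)
  rw [h1, Fintype.card_prod] at h2
  have h3 : Fintype.card {uv : K × K // uv.1 * uv.2 = 0} ≤ Fintype.card K * Fintype.card K := by
    rw [← Fintype.card_prod]; exact Fintype.card_subtype_le _
  have hq1 : 1 ≤ Fintype.card K := Fintype.card_pos
  obtain ⟨m, hm⟩ : ∃ m, Fintype.card K = m + 1 := ⟨_, (Nat.succ_pred_eq_of_pos hq1).symm⟩
  rw [hm] at h2 h3 ⊢
  have hmm : (m + 1) * (m + 1) = m * m + 2 * m + 1 := by ring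
  rw [hmm] at h2 h3
  simp only [Nat.add_sub_cancel] at h2
  generalize m * m = k at h2 h3
  omega

lemma aux_card_sq_four (h2 : (2 : K) ≠ 0) :
    Fintype.card {w : K // w ^ 2 = 4} = 2 := by
  have key : ∀ w : K, w ^ 2 = 4 ↔ w = 2 ∨ w = -2 := by
    intro w
    constructor
    · intro h
      rcases mul_eq_zero.mp (show (w - 2) * (w + 2) = 0 by linear_combination h) with h' | h'
      · exact Or.inl (by linear_combination h')
      · exact Or.inr (by linear_combination h')
    · rintro (rfl | rfl) <;> ring
  rw [Fintype.card_subtype]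
  have : (univ.filter fun w : K => w ^ 2 = 4) = {2, -2} := by
    ext w; simp [key w]
  rw [this]
  rw [card_insert_of_notMem (by
    simp only [mem_singleton]
    intro h
    have h4 : (2 : K) * 2 = 0 := by linear_combination h
    rcases mul_eq_zero.mp h4 with h' | h' <;> exact h2 h'), card_singleton]

def PredA (K : Type) [Field K] (z : K) (w : K × K) : Prop :=
  z^4 - w.1*w.2*z^3 + (w.1^2 + w.2^2 - 3)*z^2 - w.1*w.2*z + 1 = 0

instance (z : K) : DecidablePred (PredA K z) := fun w => by unfold PredA; infer_instance

lemma aux_slice_zero : Fintype.card {w : K × K // PredA K 0 w} = 0 := by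
  rw [Fintype.card_eq_zero_iff]
  refine ⟨fun w => ?_⟩
  have := w.2
  simp only [PredA] at this
  rw [show ((0:K)^4 - w.1.1*w.1.2*0^3 + (w.1.1^2 + w.1.2^2 - 3)*0^2 - w.1.1*w.1.2*0 + 1) = 1 by ring] at this
  exact one_ne_zero this

lemma aux_slice_transform (h2 : (2:K) ≠ 0) (z : K) (hz : z ≠ 0) :
    Fintype.card {w : K × K // PredA K z w} =
    Fintype.card {w : K × K // w.1^2 = (z^2-1)^2*w.2^2 - 4*(z^4-3*z^2+1)} := by
  have h2z : 2*z ≠ 0 := mul_ne_zero h2 hz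
  apply Fintype.card_congr
  refine Equiv.subtypeEquiv
    ⟨fun w => (2*z*w.1 - w.2*(z^2+1), w.2), fun w => ((w.1 + w.2*(z^2+1))/(2*z), w.2), ?_, ?_⟩ ?_
  · rintro ⟨x, y⟩
    refine Prod.ext ?_ rfl
    show (2*z*x - y*(z^2+1) + y*(z^2+1))/(2*z) = x
    field_simp
    try ring
  · rintro ⟨w, y⟩
    refine Prod.ext ?_ rfl
    show 2*z*((w + y*(z^2+1))/(2*z)) - y*(z^2+1) = w
    field_simp
    try ring
  · rintro ⟨x, y⟩
    simp only [PredA, Equiv.coe_fn_mk]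
    constructor
    · intro h
      linear_combination 4*h
    · intro h
      have h4 : (4:K) ≠ 0 := by
        intro hc
        rcases mul_eq_zero.mp (show (2:K)*2 = 0 by linear_combination hc) with h' | h' <;> exact h2 h'
      have : (4:K) * (z^4 - x*y*z^3 + (x^2 + y^2 - 3)*z^2 - x*y*z + 1) = 0 := by
        linear_combination h
      rcases mul_eq_zero.mp this with h' | h'
      · exact absurd h' h4
      · exact h'

lemma aux_slice_sq_one (h2 : (2:K) ≠ 0) (z : K) (hz1 : z^2 = 1) :
    Fintype.card {w : K × K // w.1^2 = (z^2-1)^2*w.2^2 - 4*(z^4-3*z^2+1)} =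
    2 * Fintype.card K := by
  have e1 : ∀ w : K × K, (w.1^2 = (z^2-1)^2*w.2^2 - 4*(z^4-3*z^2+1)) ↔ w.1^2 = 4 := by
    intro w
    rw [show (z^2-1)^2*w.2^2 - 4*(z^4-3*z^2+1) = (4:K) by
      linear_combination (w.2^2*(z^2-1) - 4*(z^2-2))*hz1]
  rw [Fintype.card_congr (Equiv.subtypeEquivRight e1)]
  have e2 : {w : K × K // w.1^2 = 4} ≃ {w : K // w^2 = 4} × K :=
    ⟨fun w => (⟨w.1.1, w.2⟩, w.1.2), fun u => ⟨(u.1.1, u.2), u.1.2⟩, fun w => rfl, fun u => rfl⟩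
  rw [Fintype.card_congr e2, Fintype.card_prod, aux_card_sq_four h2]

lemma aux_slice_conic (h2 : (2:K) ≠ 0) (z : K) (hz1 : z^2 ≠ 1) :
    Fintype.card {w : K × K // w.1^2 = (z^2-1)^2*w.2^2 - 4*(z^4-3*z^2+1)} =
    Fintype.card {uv : K × K // uv.1 * uv.2 = -(4*(z^4-3*z^2+1))} := by
  have hs : z^2 - 1 ≠ 0 := sub_ne_zero.mpr hz1
  have h2s : 2*(z^2-1) ≠ 0 := mul_ne_zero h2 hs
  apply Fintype.card_congr
  refine Equiv.subtypeEquiv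
    ⟨fun w => (w.1 - (z^2-1)*w.2, w.1 + (z^2-1)*w.2),
     fun u => ((u.1+u.2)/2, (u.2-u.1)/(2*(z^2-1))), ?_, ?_⟩ ?_
  · rintro ⟨x, y⟩
    refine Prod.ext ?_ ?_
    · show (x - (z^2-1)*y + (x + (z^2-1)*y))/2 = x
      field_simp
      try ring
    · show (x + (z^2-1)*y - (x - (z^2-1)*y))/(2*(z^2-1)) = y
      field_simp
      try ring
  · rintro ⟨u, v⟩
    refine Prod.ext ?_ ?_
    · show (u+v)/2 - (z^2-1)*((v-u)/(2*(z^2-1))) = u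
      field_simp
      try ring
    · show (u+v)/2 + (z^2-1)*((v-u)/(2*(z^2-1))) = v
      field_simp
      try ring
  · rintro ⟨x, y⟩
    simp only [Equiv.coe_fn_mk]
    constructor
    · intro h
      linear_combination h
    · intro h
      linear_combination h

lemma aux_slice_value (h2 : (2:K) ≠ 0) (z : K) :
    Fintype.card {w : K × K // PredA K z w} =
    (if z = 0 then 0 else if z^2 = 1 then 2 * Fintype.card K
      else if z^4 - 3*z^2 + 1 = 0 then 2 * Fintype.card K - 1 else Fintype.card K - 1) := by
  by_cases h0 : z = 0
  · subst h0
    rw [if_pos rfl]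
    exact aux_slice_zero
  rw [if_neg h0, aux_slice_transform h2 z h0]
  by_cases h1 : z^2 = 1
  · rw [if_pos h1]
    exact aux_slice_sq_one h2 z h1
  rw [if_neg h1, aux_slice_conic h2 z h1]
  have h4 : (4:K) ≠ 0 := by
    intro h
    rcases mul_eq_zero.mp (show (2:K)*2 = 0 by linear_combination h) with h' | h' <;> exact h2 h'
  by_cases hB : z^4 - 3*z^2 + 1 = 0
  · rw [if_pos hB]
    rw [Fintype.card_congr (Equiv.subtypeEquivRight (q := fun uv : K × K => uv.1 * uv.2 = 0)
      (fun uv => by rw [hB, mul_zero, neg_zero]))]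
    exact aux_card_cross
  · rw [if_neg hB]
    exact aux_card_hyperbola _ (neg_ne_zero.mpr (mul_ne_zero h4 hB))

theorem stmt_8 (p n : ℕ) [Fact p.Prime] (h2 : p ≠ 2) (h5 : p ≠ 5) (hn : 0 < n)
    (hleg : legendreSym p 5 = 1)
    (F : Type) [Field F] [Fintype F] (hF : Fintype.card F = p ^ n) :
    Nat.card {v : F × F × F //
      v.2.2 ^ 4 - v.1 * v.2.1 * v.2.2 ^ 3 + (v.1 ^ 2 + v.2.1 ^ 2 - 3) * v.2.2 ^ 2
        - v.1 * v.2.1 * v.2.2 + 1 = 0} = (p ^ n) ^ 2 + 4 * p ^ n + 3 := by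
  classical
  have hp : p.Prime := Fact.out
  -- characteristic of F is p
  have hcast : ((Fintype.card F : ℕ) : F) = 0 := FiniteField.cast_card_eq_zero F
  rw [hF] at hcast
  have hpF : ((p : ℕ) : F) = 0 := by
    push_cast at hcast
    exact pow_eq_zero_iff hn.ne' |>.mp hcast
  have hdvd : ringChar F ∣ p := (CharP.cast_eq_zero_iff F (ringChar F) p).mp hpF
  have hrc : ringChar F = p := by
    rcases CharP.char_is_prime_or_zero F (ringChar F) with hq | hq
    · exact (Nat.prime_dvd_prime_iff_eq hq hp).mp hdvd
    · rw [hq] at hdvd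
      exact absurd (zero_dvd_iff.mp hdvd) hp.ne_zero
  haveI hchar : CharP F p := hrc ▸ ringChar.charP F
  -- basic nonvanishing
  have h2F : (2 : F) ≠ 0 := by
    have : ((2 : ℕ) : F) ≠ 0 := by
      rw [Ne, CharP.cast_eq_zero_iff F p]
      exact fun hd => h2 ((Nat.prime_dvd_prime_iff_eq hp Nat.prime_two).mp hd)
    exact_mod_cast this
  have h5F : (5 : F) ≠ 0 := by
    have : ((5 : ℕ) : F) ≠ 0 := by
      rw [Ne, CharP.cast_eq_zero_iff F p]
      exact fun hd => h5 ((Nat.prime_dvd_prime_iff_eq hp (by norm_num)).mp hd)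
    exact_mod_cast this
  have h4F : (4 : F) ≠ 0 := by
    intro h
    rcases mul_eq_zero.mp (show (2:F) * 2 = 0 by linear_combination h) with h' | h' <;>
      exact h2F h'
  -- a square root of 5 in F
  have h5Z : ((5 : ℤ) : ZMod p) ≠ 0 := by
    have : ((5 : ℕ) : ZMod p) ≠ 0 := by
      rw [Ne, ZMod.natCast_eq_zero_iff]
      exact fun hd => h5 ((Nat.prime_dvd_prime_iff_eq hp (by norm_num)).mp hd)
    exact_mod_cast this
  have hsq5 : IsSquare (5 : ZMod p) := by
    have := (legendreSym.eq_one_iff p h5Z).mp hleg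
    exact_mod_cast this
  obtain ⟨t, ht⟩ := hsq5
  set r : F := ZMod.castHom (dvd_refl p) F t with hrd
  have hr : r * r = 5 := by
    have := congrArg (ZMod.castHom (dvd_refl p) F) ht
    rw [map_mul, map_ofNat] at this
    exact this.symm
  -- facts about r
  have hr0 : r ≠ 0 := fun h => h5F (by rw [← hr, h, mul_zero])
  have hrn1 : r ≠ 1 := fun h => h4F (by linear_combination -hr + (r+1)*h)
  have hrm1 : r ≠ -1 := fun h => h4F (by linear_combination -hr + (r-1)*h)
  have hr3 : r ≠ 3 := fun h => h4F (by linear_combination hr - (r+3)*h)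
  have hrm3 : r ≠ -3 := fun h => h4F (by linear_combination hr - (r-3)*h)
  -- the four roots of z^4 - 3z^2 + 1  (2a = 1+r, 2b = 1-r, 2c = -1+r, 2d = -1-r)
  obtain ⟨a, hadf⟩ : ∃ x : F, 2*x = 1+r := ⟨(1+r)/2, by rw [mul_comm, div_mul_cancel₀ _ h2F]⟩
  obtain ⟨b, hbdf⟩ : ∃ x : F, 2*x = 1-r := ⟨(1-r)/2, by rw [mul_comm, div_mul_cancel₀ _ h2F]⟩
  obtain ⟨c, hcdf⟩ : ∃ x : F, 2*x = -1+r := ⟨(-1+r)/2, by rw [mul_comm, div_mul_cancel₀ _ h2F]⟩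
  obtain ⟨d, hddf⟩ : ∃ x : F, 2*x = -1-r := ⟨(-1-r)/2, by rw [mul_comm, div_mul_cancel₀ _ h2F]⟩
  have hqA : a^2 - a - 1 = 0 := by
    have h4A : (4:F) * (a^2 - a - 1) = 0 := by linear_combination (2*a+r-1)*hadf + hr
    exact (mul_eq_zero.mp h4A).resolve_left h4F
  have hqB : b^2 - b - 1 = 0 := by
    have h4B : (4:F) * (b^2 - b - 1) = 0 := by linear_combination (2*b-1-r)*hbdf + hr
    exact (mul_eq_zero.mp h4B).resolve_left h4F
  have hqC : c^2 + c - 1 = 0 := by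
    have h4C : (4:F) * (c^2 + c - 1) = 0 := by linear_combination (2*c+1+r)*hcdf + hr
    exact (mul_eq_zero.mp h4C).resolve_left h4F
  have hqD : d^2 + d - 1 = 0 := by
    have h4D : (4:F) * (d^2 + d - 1) = 0 := by linear_combination (2*d+1-r)*hddf + hr
    exact (mul_eq_zero.mp h4D).resolve_left h4F
  -- nonmembership facts
  have ha0 : a ≠ 0 := fun h => hrm1 (by linear_combination -hadf + 2*h)
  have hb0 : b ≠ 0 := fun h => hrn1 (by linear_combination hbdf - 2*h)
  have hc0 : c ≠ 0 := fun h => hrn1 (by linear_combination -hcdf + 2*h)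
  have hd0 : d ≠ 0 := fun h => hrm1 (by linear_combination hddf - 2*h)
  have ha1 : a ≠ 1 := fun h => hrn1 (by linear_combination -hadf + 2*h)
  have ham1 : a ≠ -1 := fun h => hrm3 (by linear_combination -hadf + 2*h)
  have hb1 : b ≠ 1 := fun h => hrm1 (by linear_combination hbdf - 2*h)
  have hbm1 : b ≠ -1 := fun h => hr3 (by linear_combination hbdf - 2*h)
  have hc1 : c ≠ 1 := fun h => hr3 (by linear_combination -hcdf + 2*h)
  have hcm1 : c ≠ -1 := fun h => hrm1 (by linear_combination -hcdf + 2*h)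
  have hd1 : d ≠ 1 := fun h => hrm3 (by linear_combination hddf - 2*h)
  have hdm1 : d ≠ -1 := fun h => hrn1 (by linear_combination hddf - 2*h)
  have hab : a ≠ b := by
    intro h
    have h2r : (2:F) * r = 0 := by linear_combination -hadf + hbdf + 2*h
    exact hr0 ((mul_eq_zero.mp h2r).resolve_left h2F)
  have hac : a ≠ c := by
    intro h
    exact h2F (by linear_combination -hadf + hcdf + 2*h)
  have had : a ≠ d := by
    intro h
    have h2r : (2:F) * (r + 1) = 0 := by linear_combination -hadf + hddf + 2*h
    exact hrm1 (eq_neg_of_add_eq_zero_left ((mul_eq_zero.mp h2r).resolve_left h2F))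
  have hbc : b ≠ c := by
    intro h
    have h2r : (2:F) * (r - 1) = 0 := by linear_combination hbdf - hcdf - 2*h
    exact hrn1 (sub_eq_zero.mp ((mul_eq_zero.mp h2r).resolve_left h2F))
  have hbd : b ≠ d := by
    intro h
    exact h2F (by linear_combination -hbdf + hddf + 2*h)
  have hcd : c ≠ d := by
    intro h
    have h2r : (2:F) * r = 0 := by linear_combination -hcdf + hddf + 2*h
    exact hr0 ((mul_eq_zero.mp h2r).resolve_left h2F)
  -- squares of roots are not 1
  have haS : a^2 ≠ 1 := fun h => ha0 (by linear_combination h - hqA)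
  have hbS : b^2 ≠ 1 := fun h => hb0 (by linear_combination h - hqB)
  have hcS : c^2 ≠ 1 := fun h => hc0 (by linear_combination hqC - h)
  have hdS : d^2 ≠ 1 := fun h => hd0 (by linear_combination hqD - h)
  -- roots satisfy the quartic
  have haQ : a^4 - 3*a^2 + 1 = 0 := by linear_combination (a^2+a-1)*hqA
  have hbQ : b^4 - 3*b^2 + 1 = 0 := by linear_combination (b^2+b-1)*hqB
  have hcQ : c^4 - 3*c^2 + 1 = 0 := by linear_combination (c^2-c-1)*hqC
  have hdQ : d^4 - 3*d^2 + 1 = 0 := by linear_combination (d^2-d-1)*hqD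
  -- characterizations
  have hsq1 : ∀ z : F, z^2 = 1 ↔ z = 1 ∨ z = -1 := by
    intro z
    constructor
    · intro h
      rcases mul_eq_zero.mp (show (z-1)*(z+1) = 0 by linear_combination h) with h' | h'
      · exact Or.inl (by linear_combination h')
      · exact Or.inr (by linear_combination h')
    · rintro (rfl | rfl) <;> ring
  have h16F : (16:F) ≠ 0 := by
    have h : (2:F)^4 = 16 := by norm_num
    rw [← h]
    exact pow_ne_zero 4 h2F
  have hfac : ∀ z : F, z^4 - 3*z^2 + 1 = (z-a)*(z-b)*(z-c)*(z-d) := by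
    intro z
    have e1 : 2*(z-a) = 2*z-1-r := by linear_combination -hadf
    have e2 : 2*(z-b) = 2*z-1+r := by linear_combination -hbdf
    have e3 : 2*(z-c) = 2*z+1-r := by linear_combination -hcdf
    have e4 : 2*(z-d) = 2*z+1+r := by linear_combination -hddf
    have h16 : (16:F) * ((z-a)*(z-b)*(z-c)*(z-d)) = 16 * (z^4-3*z^2+1) := by
      calc (16:F) * ((z-a)*(z-b)*(z-c)*(z-d))
          = (2*(z-a))*(2*(z-b))*(2*(z-c))*(2*(z-d)) := by ring
        _ = (2*z-1-r)*(2*z-1+r)*(2*z+1-r)*(2*z+1+r) := by rw [e1, e2, e3, e4]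
        _ = 16 * (z^4-3*z^2+1) := by
            linear_combination (r*r + 5 - (2*z-1)^2 - (2*z+1)^2) * hr
    exact (mul_left_cancel₀ h16F h16).symm
  have hquart : ∀ z : F, z^4 - 3*z^2 + 1 = 0 ↔ z = a ∨ z = b ∨ z = c ∨ z = d := by
    intro z
    rw [hfac z]
    simp only [mul_eq_zero, sub_eq_zero, or_assoc]
  -- decompose the count
  rw [← hF]
  set q := Fintype.card F with hqd
  have e1 : {v : F × F × F //
      v.2.2 ^ 4 - v.1 * v.2.1 * v.2.2 ^ 3 + (v.1 ^ 2 + v.2.1 ^ 2 - 3) * v.2.2 ^ 2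
        - v.1 * v.2.1 * v.2.2 + 1 = 0} ≃ Σ z : F, {w : F × F // PredA F z w} :=
    ⟨fun v => ⟨v.1.2.2, ⟨(v.1.1, v.1.2.1), v.2⟩⟩,
     fun s => ⟨(s.2.1.1, s.2.1.2, s.1), s.2.2⟩,
     fun v => by rfl, fun s => by rfl⟩
  rw [Nat.card_eq_fintype_card, Fintype.card_congr e1, Fintype.card_sigma]
  have hkey : ∀ z : F, Fintype.card {w : F × F // PredA F z w} =
      (if z = 0 then 0 else if z^2 = 1 then 2*q
        else if z^4 - 3*z^2 + 1 = 0 then 2*q - 1 else q - 1) :=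
    fun z => aux_slice_value h2F z
  rw [Finset.sum_congr rfl fun z _ => hkey z]
  -- split the sum
  set S : Finset F := {0, 1, -1, a, b, c, d} with hSd
  have h0S : (0:F) ∉ ({1, -1, a, b, c, d} : Finset F) := by
    simp only [mem_insert, mem_singleton]
    push_neg
    exact ⟨zero_ne_one, fun h => one_ne_zero (α := F) (by linear_combination h),
      Ne.symm ha0, Ne.symm hb0, Ne.symm hc0, Ne.symm hd0⟩
  have h1S : (1:F) ∉ ({-1, a, b, c, d} : Finset F) := by
    simp only [mem_insert, mem_singleton]
    push_neg
    exact ⟨fun h => h2F (by linear_combination h),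
      Ne.symm ha1, Ne.symm hb1, Ne.symm hc1, Ne.symm hd1⟩
  have hm1S : (-1:F) ∉ ({a, b, c, d} : Finset F) := by
    simp only [mem_insert, mem_singleton]
    push_neg
    exact ⟨Ne.symm ham1, Ne.symm hbm1, Ne.symm hcm1, Ne.symm hdm1⟩
  have haM : a ∉ ({b, c, d} : Finset F) := by
    simp only [mem_insert, mem_singleton]
    push_neg
    exact ⟨hab, hac, had⟩
  have hbM : b ∉ ({c, d} : Finset F) := by
    simp only [mem_insert, mem_singleton]
    push_neg
    exact ⟨hbc, hbd⟩
  have hcM : c ∉ ({d} : Finset F) := by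
    simp only [mem_singleton]
    exact hcd
  have hScard : S.card = 7 := by
    rw [hSd, card_insert_of_notMem h0S, card_insert_of_notMem h1S,
      card_insert_of_notMem hm1S, card_insert_of_notMem haM,
      card_insert_of_notMem hbM, card_insert_of_notMem hcM, card_singleton]
  rw [← Finset.sum_sdiff (Finset.subset_univ S)]
  have hcomp : ∀ z ∈ univ \ S, (if z = 0 then 0 else if z^2 = 1 then 2*q
      else if z^4 - 3*z^2 + 1 = 0 then 2*q - 1 else q - 1) = q - 1 := by
    intro z hz
    rw [mem_sdiff] at hz
    have hz' := hz.2
    rw [hSd] at hz'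
    simp only [mem_insert, mem_singleton] at hz'
    push_neg at hz'
    obtain ⟨hz0, hz1, hzm1, hza, hzb, hzc, hzd⟩ := hz'
    rw [if_neg hz0, if_neg (fun h => ((hsq1 z).mp h).elim hz1 hzm1),
      if_neg (fun h => by
        rcases (hquart z).mp h with h' | h' | h' | h'
        exacts [hza h', hzb h', hzc h', hzd h'])]
  rw [Finset.sum_congr rfl hcomp, Finset.sum_const, Finset.card_univ_diff, hScard,
    smul_eq_mul, ← hqd]
  rw [hSd, Finset.sum_insert h0S, Finset.sum_insert h1S, Finset.sum_insert hm1S,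
    Finset.sum_insert haM, Finset.sum_insert hbM, Finset.sum_insert hcM,
    Finset.sum_singleton]
  rw [if_pos rfl,
    if_neg (one_ne_zero (α := F)), if_pos (one_pow 2),
    if_neg (fun h : (-1:F) = 0 => one_ne_zero (α := F) (by linear_combination -h)),
    if_pos (neg_one_sq (R := F)),
    if_neg ha0, if_neg haS, if_pos haQ,
    if_neg hb0, if_neg hbS, if_pos hbQ,
    if_neg hc0, if_neg hcS, if_pos hcQ,
    if_neg hd0, if_neg hdS, if_pos hdQ]
  have hq7 : 7 ≤ q := hScard ▸ Finset.card_le_univ S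
  obtain ⟨m, hm⟩ : ∃ m, q = m + 7 := ⟨q - 7, by omega⟩
  rw [hm]
  rw [show m + 7 - 7 = m from by omega, show m + 7 - 1 = m + 6 from by omega,
    show 2*(m+7) - 1 = 2*m + 13 from by omega]
  ring
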